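/- Dynamic program correctness for the (n, y)-algorithm: define for an equitable committee sequence election instance with agents a_1,…,a_n the predicate D[t, (y_1,…,y_n)] to hold iff there exist committees C_1,…,C_t, each of size at most k and committee score at least x in its level, such that for every i, the number of levels s ≤ t with u_s(a_i) ∈ C_s equals y_i. Then D satisfies the recurrence: D[t, y⃗] holds iff there exists a vector y⃗' and a committee C' ⊆ C with |C'| ≤ k and |{a : u_t(a) ∈ C'}| ≥ x such that y⃗' + c⃗ = y⃗ and D[t−1, y⃗'] holds, where c⃗ ∈ {0,1}^n has c_i = 1 iff u_t(a_i) ∈ C'. Moreover the instance is a yes-instance iff D[τ, (y,…,y)] holds. -/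

import Mathlib

open scoped Classical

noncomputable def levelScore {A C : Type*} [Fintype A] (u : A → Option C) (S : Finset C) : ℕ :=
  (Finset.univ.filter fun a => ∃ c ∈ S, u a = some c).card

/-- `DP u k x t yv` holds iff there are committees for the first `t` levels, each of size
at most `k` and level score at least `x`, such that agent `i`'s nominee is chosen in
exactly `yv i` of these levels. -/
noncomputable def DP {n τ : ℕ} {C : Type*} (u : Fin τ → Fin n → Option C) (k x : ℕ)
    (t : ℕ) (yv : Fin n → ℕ) : Prop :=
  ∃ Cs : Fin τ → Finset C,
    (∀ s : Fin τ, (s : ℕ) < t → (Cs s).card ≤ k ∧ x ≤ levelScore (u s) (Cs s)) ∧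
    ∀ i, (Finset.univ.filter fun s : Fin τ =>
        (s : ℕ) < t ∧ ∃ c ∈ Cs s, u s i = some c).card = yv i


lemma count_split {τ : ℕ} (t : ℕ) (ht : t ≤ τ) (ht1 : 1 ≤ t) (P : Fin τ → Prop)
    [DecidablePred P] :
    (Finset.univ.filter fun s : Fin τ => (s : ℕ) < t ∧ P s).card =
      (Finset.univ.filter fun s : Fin τ => (s : ℕ) < t - 1 ∧ P s).card +
      (if P ⟨t - 1, by omega⟩ then 1 else 0) := by
  classical
  have hsplit : (Finset.univ.filter fun s : Fin τ => (s : ℕ) < t ∧ P s) =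
      (Finset.univ.filter fun s : Fin τ => (s : ℕ) < t - 1 ∧ P s) ∪
      (Finset.univ.filter fun s : Fin τ => (s : ℕ) = t - 1 ∧ P s) := by
    ext s
    simp only [Finset.mem_filter, Finset.mem_union, Finset.mem_univ, true_and]
    constructor
    · rintro ⟨hs, hp⟩
      rcases Nat.lt_or_ge (s : ℕ) (t - 1) with h | h
      · exact Or.inl ⟨h, hp⟩
      · exact Or.inr ⟨by omega, hp⟩
    · rintro (⟨hs, hp⟩ | ⟨hs, hp⟩) <;> exact ⟨by omega, hp⟩
  have hdisj : Disjoint (Finset.univ.filter fun s : Fin τ => (s : ℕ) < t - 1 ∧ P s)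
      (Finset.univ.filter fun s : Fin τ => (s : ℕ) = t - 1 ∧ P s) := by
    simp only [Finset.disjoint_filter]
    rintro s _ ⟨h1, _⟩ ⟨h2, _⟩
    omega
  rw [hsplit, Finset.card_union_of_disjoint hdisj]
  congr 1
  by_cases hp : P ⟨t - 1, by omega⟩
  · rw [if_pos hp]
    have : (Finset.univ.filter fun s : Fin τ => (s : ℕ) = t - 1 ∧ P s) = {⟨t - 1, by omega⟩} := by
      ext s
      simp only [Finset.mem_filter, Finset.mem_univ, true_and, Finset.mem_singleton]
      constructor
      · rintro ⟨h1, _⟩; exact Fin.ext h1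
      · rintro rfl; exact ⟨rfl, hp⟩
    rw [this]; rfl
  · rw [if_neg hp]
    rw [Finset.card_eq_zero, Finset.filter_eq_empty_iff]
    rintro s _ ⟨h1, hp'⟩
    have : s = ⟨t - 1, by omega⟩ := Fin.ext h1
    exact hp (this ▸ hp')

/-- Dynamic program correctness for the `(n, y)`-algorithm for the equitable problem:
`DP` satisfies the level-by-level recurrence (adding a valid committee `C'` for level `t`
whose fingerprint increments the agent score vector), and the instance is a yes-instance
iff `DP` holds at `τ` with the all-`y` vector. -/
theorem dp_correct {n τ : ℕ} {C : Type*} (u : Fin τ → Fin n → Option C) (k x y : ℕ) :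
    (∀ (t : ℕ) (ht1 : 1 ≤ t) (ht : t ≤ τ) (yv : Fin n → ℕ),
      DP u k x t yv ↔
        ∃ (yv' : Fin n → ℕ) (C' : Finset C),
          C'.card ≤ k ∧ x ≤ levelScore (u ⟨t - 1, by omega⟩) C' ∧
          (∀ i, yv i = yv' i +
            (if ∃ c ∈ C', u ⟨t - 1, by omega⟩ i = some c then 1 else 0)) ∧
          DP u k x (t - 1) yv') ∧
    ((∃ Cs : Fin τ → Finset C,
        (∀ s, (Cs s).card ≤ k ∧ x ≤ levelScore (u s) (Cs s)) ∧
        ∀ i, (Finset.univ.filter fun s : Fin τ => ∃ c ∈ Cs s, u s i = some c).card = y)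
      ↔ DP u k x τ (fun _ => y)) := by
  constructor
  · intro t ht1 ht yv
    constructor
    · rintro ⟨Cs, hCs, hcount⟩
      refine ⟨fun i => (Finset.univ.filter fun s : Fin τ =>
          (s : ℕ) < t - 1 ∧ ∃ c ∈ Cs s, u s i = some c).card,
        Cs ⟨t - 1, by omega⟩, (hCs _ (by simp; omega)).1, (hCs _ (by simp; omega)).2,
        ?_, Cs, fun s hs => hCs s (by omega), fun i => rfl⟩
      intro i
      rw [← hcount i]
      exact count_split t ht ht1 (fun s => ∃ c ∈ Cs s, u s i = some c)
    · rintro ⟨yv', C', hk, hx, hyv, Cs', hCs', hcount'⟩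
      refine ⟨fun s => if (s : ℕ) = t - 1 then C' else Cs' s, ?_, ?_⟩
      · intro s hs
        by_cases h : (s : ℕ) = t - 1
        · simp only [if_pos h]
          have hs' : s = ⟨t - 1, by omega⟩ := Fin.ext h
          rw [hs']
          exact ⟨hk, hx⟩
        · simp only [if_neg h]
          exact hCs' s (by omega)
      · intro i
        rw [hyv i, ← hcount' i]
        beta_reduce
        rw [count_split t ht ht1
          (fun s : Fin τ => ∃ c ∈ (if (s : ℕ) = t - 1 then C' else Cs' s), u s i = some c)]
        congr 1
        · congr 1
          ext s
          simp only [Finset.mem_filter, Finset.mem_univ, true_and]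
          constructor
          · rintro ⟨h1, c, hc1, hc2⟩
            rw [if_neg (by omega)] at hc1
            exact ⟨h1, c, hc1, hc2⟩
          · rintro ⟨h1, c, hc1, hc2⟩
            exact ⟨h1, c, by rwa [if_neg (by omega)], hc2⟩
        · simp
  · constructor
    · rintro ⟨Cs, hCs, hcount⟩
      refine ⟨Cs, fun s _ => hCs s, fun i => ?_⟩
      rw [← hcount i]
      congr 1
      ext s
      simp [s.isLt]
    · rintro ⟨Cs, hCs, hcount⟩
      refine ⟨Cs, fun s => hCs s s.isLt, fun i => ?_⟩
      have h := hcount i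
      beta_reduce at h
      rw [← h]
      congr 1
      ext s
      simp [s.isLt]
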